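/- Every cactus graph H has a set S ⊆ V(H) such that the induced subgraph H[S] is a single vertex, a single edge, or a cycle, and every automorphism π of H satisfies π(S) = S. -/

import Mathlib

open SimpleGraph

/-- The number of walks of length `n` from `u` to `v` in `G`. -/
noncomputable def walkCount {V : Type*} (G : SimpleGraph V) (n : ℕ) (u v : V) : ℕ :=
  Nat.card {w : G.Walk u v // w.length = n}

/-- The degree of a vertex, as the cardinality of its neighbour set. -/
noncomputable def vdeg {V : Type*} (G : SimpleGraph V) (v : V) : ℕ :=
  (G.neighborSet v).ncard

/-- An involution of a graph: an automorphism of order two. -/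
def IsInvolution {V : Type*} (G : SimpleGraph V) (σ : G ≃g G) : Prop :=
  σ.toEquiv ≠ Equiv.refl V ∧ ∀ v, σ (σ v) = v

/-- A graph is involution-free if it has no involution. -/
def InvolutionFree {V : Type*} (G : SimpleGraph V) : Prop :=
  ¬ ∃ σ : G ≃g G, IsInvolution G σ

/-- A rooted graph `(G, x)` is involution-free if `G` has no involution fixing `x`. -/
def RootedInvolutionFree {V : Type*} (G : SimpleGraph V) (x : V) : Prop :=
  ¬ ∃ σ : G ≃g G, IsInvolution G σ ∧ σ x = x

/-- Every edge of `G` belongs to at most one cycle: any two cycles sharing an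
edge have the same edge set. -/
def EdgesOnAtMostOneCycle {V : Type*} (G : SimpleGraph V) : Prop :=
  ∀ (a b : V) (c : G.Walk a a) (d : G.Walk b b), c.IsCycle → d.IsCycle →
    ∀ e, e ∈ c.edges → e ∈ d.edges → ∀ f, f ∈ c.edges ↔ f ∈ d.edges

/-- A cactus graph: a connected simple graph in which every edge belongs to at
most one cycle. -/
def IsCactus {V : Type*} (G : SimpleGraph V) : Prop :=
  G.Connected ∧ EdgesOnAtMostOneCycle G

/-- The distance from a vertex to a set of vertices. -/
noncomputable def setDist {V : Type*} (G : SimpleGraph V) (v : V) (S : Set V) : ℕ :=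
  sInf (G.dist v '' S)

/-- A hardness gadget `(β, s, t, O, i, K, k, w)` in a graph `G`. -/
structure HardnessGadget {V : Type*} (G : SimpleGraph V) where
  β : ℕ
  s : V
  t : V
  i : V
  O : Set V
  K : Set V
  k : V → ℕ
  w : V → V
  β_pos : 0 < β
  i_not_in_O : i ∉ O
  i_not_in_K : i ∉ K
  O_disj_K : Disjoint O K
  nbhd_partition : O ∪ {i} ∪ K = G.neighborSet s
  O_odd : Odd O.ncard
  s_unique : ∀ o ∈ O, ∀ y ∈ O ∪ {i}, ∀ z : V,
    (G.Adj z o ∧ G.Adj z y ∧ Odd (walkCount G β z t)) ↔ z = s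
  i_t_even : Even (walkCount G (1 + β) i t)
  k_pos : ∀ u ∈ K, 0 < k u
  w_walks : ∀ u ∈ K, Even (walkCount G (k u) (w u) u) ∧
    ∀ y ∈ O ∪ {i}, Odd (walkCount G (k u) (w u) y)

/-- The distance requirements of a hardness gadget with respect to a vertex `v`. -/
def HardnessGadget.SatisfiesDistReq {V : Type*} {G : SimpleGraph V}
    (Γ : HardnessGadget G) (v : V) : Prop :=
  ((setDist G v (Γ.O ∪ {Γ.i}) : ℤ) + (G.dist v Γ.t : ℤ) > (Γ.β : ℤ) - 1) ∧
  ∀ u ∈ Γ.K, ((G.dist v (Γ.w u) : ℤ) + (setDist G v (Γ.O ∪ {Γ.i, u}) : ℤ)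
      > (Γ.k u : ℤ) - 2)

/-- `P` is the unique shortest path between its endpoints. -/
def IsUniqueShortestPath {V : Type*} (G : SimpleGraph V) {u v : V}
    (P : G.Walk u v) : Prop :=
  P.IsPath ∧ ∀ Q : G.Walk u v, Q.IsPath → Q.length ≤ P.length → Q = P

/-- The graph `G` contains a cycle. -/
def HasCycle {V : Type*} (G : SimpleGraph V) : Prop :=
  ∃ (a : V) (c : G.Walk a a), c.IsCycle

/-- The edge `e` lies on a 4-cycle of `G`. -/
def EdgeOnFourCycle {V : Type*} (G : SimpleGraph V) (e : Sym2 V) : Prop :=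
  ∃ (a : V) (c : G.Walk a a), c.IsCycle ∧ c.length = 4 ∧ e ∈ c.edges

/-- An unbristled mosaic: the one-vertex rooted graph, or a rooted cactus graph
that is a union of 4-cycles. -/
def IsUnbristledMosaic {V : Type*} (G : SimpleGraph V) (x : V) : Prop :=
  (∀ v : V, v = x) ∨ (IsCactus G ∧ ∀ e ∈ G.edgeSet, EdgeOnFourCycle G e)

/-- A mosaic: a rooted graph obtained from an unbristled mosaic on a vertex
subset `V'` containing the root by attaching a perfect matching ("bristles")
between the remaining vertices and a subset of `V'`. -/
def IsMosaic {V : Type*} (G : SimpleGraph V) (x : V) : Prop :=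
  ∃ (V' : Set V) (hx : x ∈ V'),
    IsUnbristledMosaic (G.induce V') ⟨x, hx⟩ ∧
    (∀ v, v ∉ V' → ∀ u, G.Adj v u → u ∈ V') ∧
    (∀ v, v ∉ V' → ∃! u, G.Adj v u) ∧
    (∀ u v₁ v₂, v₁ ∉ V' → v₂ ∉ V' → G.Adj u v₁ → G.Adj u v₂ → v₁ = v₂)

/-- A proper mosaic: a mosaic containing at least one cycle. -/
def IsProperMosaic {V : Type*} (G : SimpleGraph V) (x : V) : Prop :=
  IsMosaic G x ∧ HasCycle G

/-- A shortcut in the rooted graph `(G, x)`: a pair of distinct odd-degree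
vertices of degree at least 3 with a unique shortest path between them that
avoids `x`. -/
def HasShortcut {V : Type*} (G : SimpleGraph V) (x : V) : Prop :=
  ∃ v₁ v₂ : V, v₁ ≠ v₂ ∧ Odd (vdeg G v₁) ∧ Odd (vdeg G v₂) ∧
    3 ≤ vdeg G v₁ ∧ 3 ≤ vdeg G v₂ ∧
    ∃ P : G.Walk v₁ v₂, IsUniqueShortestPath G P ∧ x ∉ P.support

/-- A 2,3-path `(P, v₂, v₃)` in a rooted graph: `v₂` and `v₃` lie on a common
cycle, have degrees 2 and 3 respectively, and the extensions of `P` by `v₂`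
and by `v₃` are unique shortest paths from the root. -/
def Is23Path {V : Type*} (G : SimpleGraph V) {x z : V} (P : G.Walk x z)
    (v₂ v₃ : V) : Prop :=
  (∃ (a : V) (c : G.Walk a a), c.IsCycle ∧ v₂ ∈ c.support ∧ v₃ ∈ c.support) ∧
  vdeg G v₂ = 2 ∧ vdeg G v₃ = 3 ∧
  (∃ h₂ : G.Adj z v₂, IsUniqueShortestPath G (P.concat h₂)) ∧
  (∃ h₃ : G.Adj z v₃, IsUniqueShortestPath G (P.concat h₃))

/-- A partial hardness gadget `(s, i, O, P)` in the rooted graph `(G, x)`. -/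
def IsPartialHardnessGadget {V : Type*} (G : SimpleGraph V) (x s i : V)
    (O : Set V) (P : G.Walk x i) : Prop :=
  i ∉ O ∧ insert i O = G.neighborSet s ∧ Odd O.ncard ∧
  IsUniqueShortestPath G P ∧
  ∃ his : G.Adj i s, IsUniqueShortestPath G (P.concat his) ∧
    ∀ o ∈ O, ∃ hso : G.Adj s o, IsUniqueShortestPath G ((P.concat his).concat hso)

/-- `C` is (the vertex set of) a connected component of `G - {x}`, i.e. of the
split of `G` at `x`; the corresponding member of the split is the subgraph of
`G` induced by `C ∪ {x}`. -/
def IsSplitComponent {V : Type*} (G : SimpleGraph V) (x : V) (C : Set V) : Prop :=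
  x ∉ C ∧ C.Nonempty ∧ (G.induce C).Connected ∧
  ∀ u ∈ C, ∀ v : V, G.Adj u v → v ≠ x → v ∈ C

/-- `x` is a cut vertex: `G - {x}` has at least two connected components. -/
def IsCutVertex {V : Type*} (G : SimpleGraph V) (x : V) : Prop :=
  ∃ C₁ C₂ : Set V, IsSplitComponent G x C₁ ∧ IsSplitComponent G x C₂ ∧ C₁ ≠ C₂

namespace CactusAux
variable {V : Type*} {G : SimpleGraph V}


variable {V : Type*} {G : SimpleGraph V}

/-- degree as ncard of neighbor set -/
noncomputable def deg (G : SimpleGraph V) (v : V) : ℕ := (G.neighborSet v).ncard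

lemma two_le_deg [Finite V] {v u w : V} (hu : G.Adj v u) (hw : G.Adj v w) (huw : u ≠ w) :
    2 ≤ deg G v := by
  have h : ({u, w} : Set V) ⊆ G.neighborSet v := by
    intro t ht; rcases ht with rfl | ht
    · exact hu
    · rcases ht with rfl; exact hw
  calc 2 = ({u, w} : Set V).ncard := (Set.ncard_pair huw).symm
    _ ≤ _ := Set.ncard_le_ncard h (Set.toFinite _)

lemma nbhd_eq_pair [Finite V] {v u w : V} (hd : deg G v = 2) (hu : G.Adj v u) (hw : G.Adj v w)
    (huw : u ≠ w) : G.neighborSet v = {u, w} := by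
  refine (Set.eq_of_subset_of_ncard_le ?_ ?_ (Set.toFinite _)).symm
  · intro t ht; rcases ht with rfl | ht
    · exact hu
    · rcases ht with rfl; exact hw
  · show (G.neighborSet v).ncard ≤ _
    rw [show (G.neighborSet v).ncard = 2 from hd, Set.ncard_pair huw]

lemma exists_third [Finite V] {v u w : V} (hd : 3 ≤ deg G v) :
    ∃ t, G.Adj v t ∧ t ≠ u ∧ t ≠ w := by
  by_contra h
  push_neg at h
  have hsub : G.neighborSet v ⊆ {u, w} := by
    intro t ht
    rcases em (t = u) with rfl | h1
    · exact Set.mem_insert _ _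
    · have := h t ht h1; subst this; exact Set.mem_insert_of_mem _ rfl
  have h3 := Set.ncard_le_ncard hsub (Set.toFinite _)
  have h2 : ({u, w} : Set V).ncard ≤ 2 := Set.ncard_insert_le _ _ |>.trans (by simp)
  have hd' : deg G v = (G.neighborSet v).ncard := rfl
  omega

lemma one_le_deg [Finite V] {v u : V} (hu : G.Adj v u) : 1 ≤ deg G v :=
  (Set.ncard_pos (Set.toFinite _)).mpr ⟨u, hu⟩

/-- in a path, at most one edge at the start vertex -/
lemma edge_at_start {v w u₁ u₂ : V} {p : G.Walk v w} (hp : p.IsPath)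
    (h1 : s(v, u₁) ∈ p.edges) (h2 : s(v, u₂) ∈ p.edges) : u₁ = u₂ := by
  cases p with
  | nil => simp at h1
  | cons h q =>
    rename_i s
    have hns : v ∉ q.support := by
      have := hp.support_nodup
      rw [Walk.support_cons] at this
      exact (List.nodup_cons.mp this).1
    have key : ∀ t, s(v, t) ∈ (Walk.cons h q).edges → t = s := by
      intro t ht
      rw [Walk.edges_cons, List.mem_cons] at ht
      rcases ht with ht | ht
      · exact Sym2.congr_right.mp ht
      · exact absurd (q.fst_mem_support_of_mem_edges ht) hns
    rw [key u₁ h1, key u₂ h2]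

lemma path_loop {v : V} {p : G.Walk v v} (hp : p.IsPath) : p = Walk.nil := by
  have : (⟨p, hp⟩ : G.Path v v) = Path.nil := Path.loop_eq _
  exact congrArg Subtype.val this

/-- appending two paths meeting only at the junction gives a path -/
lemma isPath_append {u v w : V} {p : G.Walk u v} {q : G.Walk v w} (hp : p.IsPath)
    (hq : q.IsPath) (h : ∀ y, y ∈ p.support → y ∈ q.support → y = v) :
    (p.append q).IsPath := by
  rw [Walk.isPath_def, Walk.support_append, List.nodup_append]
  refine ⟨hp.support_nodup, (List.nodup_cons.mp (q.support_eq_cons ▸ hq.support_nodup)).2, ?_⟩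
  intro y hy y' hyt hyy
  rw [← hyy] at hyt
  have hymem : y ∈ q.support := by rw [q.support_eq_cons]; exact List.mem_cons_of_mem _ hyt
  have := h y hy hymem
  subst this
  exact (List.nodup_cons.mp (q.support_eq_cons ▸ hq.support_nodup)).1 hyt

lemma mem_support_rotate [DecidableEq V] {v x u : V} (c : G.Walk v v) (h : x ∈ c.support) :
    u ∈ (c.rotate x h).support ↔ u ∈ c.support := by
  unfold Walk.rotate
  rw [Walk.mem_support_append_iff]
  conv_rhs => rw [← c.take_spec h, Walk.mem_support_append_iff]
  tauto


lemma cycle_start_nbrs {x : V} {c : G.Walk x x} (hc : c.IsCycle) :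
    ∃ u w, u ≠ w ∧ s(x, u) ∈ c.edges ∧ s(x, w) ∈ c.edges ∧
      ∀ t, s(x, t) ∈ c.edges → t = u ∨ t = w := by
  cases c with
  | nil => have := hc.three_le_length; simp at this
  | cons h q =>
    rename_i s
    obtain ⟨hq, hxs⟩ := (Walk.cons_isCycle_iff q h).mp hc
    have huniq : ∀ t₁ t₂, s(x, t₁) ∈ q.edges → s(x, t₂) ∈ q.edges → t₁ = t₂ := by
      intro t₁ t₂ h1 h2
      refine edge_at_start (p := q.reverse) hq.reverse ?_ ?_ <;>
        rw [Walk.edges_reverse, List.mem_reverse] <;> assumption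
    have hsx : x ≠ s := h.ne
    obtain ⟨s', h', t, hrev⟩ := Walk.exists_eq_cons_of_ne hsx q.reverse
    have hw : s(x, s') ∈ q.edges := by
      have : s(x, s') ∈ q.reverse.edges := by rw [hrev, Walk.edges_cons]; simp
      rw [Walk.edges_reverse, List.mem_reverse] at this
      exact this
    refine ⟨s, s', ?_, by simp [Walk.edges_cons], List.mem_cons_of_mem _ hw, ?_⟩
    · rintro rfl; exact hxs hw
    · intro t ht
      rw [Walk.edges_cons, List.mem_cons] at ht
      rcases ht with ht | ht
      · exact Or.inl (Sym2.congr_right.mp ht)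
      · exact Or.inr (huniq t s' ht hw)

/-- every vertex on a cycle has exactly two neighbours along the cycle -/
lemma cycle_nbrs [DecidableEq V] {a x : V} {c : G.Walk a a} (hc : c.IsCycle)
    (hx : x ∈ c.support) :
    ∃ u w, u ≠ w ∧ s(x, u) ∈ c.edges ∧ s(x, w) ∈ c.edges ∧
      ∀ t, s(x, t) ∈ c.edges → t = u ∨ t = w := by
  obtain ⟨u, w, huw, h1, h2, h3⟩ := cycle_start_nbrs (hc.rotate hx)
  have hmem : ∀ f : Sym2 V, f ∈ (c.rotate x hx).edges ↔ f ∈ c.edges :=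
    fun f => (c.rotate_edges x hx).mem_iff
  exact ⟨u, w, huw, (hmem _).mp h1, (hmem _).mp h2, fun t ht => h3 t ((hmem _).mpr ht)⟩

/-- KEY: in a graph where each edge is on at most one cycle, there is no path between
two cycle vertices, internally avoiding the cycle, that uses a non-cycle edge. -/
lemma crux [DecidableEq V] (hcac : EdgesOnAtMostOneCycle G) {a x y : V} {c : G.Walk a a}
    (hc : c.IsCycle) (hx : x ∈ c.support) (hy : y ∈ c.support) (hxy : x ≠ y)
    {p : G.Walk x y} (hp : p.IsPath)
    (hsupp : ∀ w ∈ p.support, w ∉ c.support ∨ w = x ∨ w = y)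
    {e : Sym2 V} (he : e ∈ p.edges) (hec : e ∉ c.edges) : False := by
  have hc₁ : (c.rotate x hx).IsCycle := hc.rotate hx
  have hy1 : y ∈ (c.rotate x hx).support := (mem_support_rotate c hx).mpr hy
  set c₁ := c.rotate x hx with hc₁def
  set a1 := c₁.takeUntil y hy1 with ha1def
  set a2 := c₁.dropUntil y hy1 with ha2def
  have hspec : a1.append a2 = c₁ := c₁.take_spec hy1
  -- a1 is a path
  have htail : c₁.support.tail = a1.support.tail ++ a2.support.tail := by
    have h1 : c₁.support = a1.support ++ a2.support.tail := by
      rw [← hspec, Walk.support_append]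
    have h2 := a1.support_eq_cons
    have h3 := c₁.support_eq_cons
    rw [h3, h2, List.cons_append] at h1
    exact (List.cons.injEq _ _ _ _ ▸ h1).2
  have hnd : c₁.support.tail.Nodup := hc₁.2
  rw [htail, List.nodup_append] at hnd
  have hxa2 : x ∈ a2.support.tail := by
    have hxe : x ∈ a2.support := a2.end_mem_support
    rw [a2.support_eq_cons, List.mem_cons] at hxe
    rcases hxe with h | h
    · exact absurd h hxy
    · exact h
  have hxa1 : x ∉ a1.support.tail := fun hmem => hnd.2.2 x hmem x hxa2 rfl
  have ha1path : a1.IsPath := by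
    rw [Walk.isPath_def, a1.support_eq_cons]
    exact List.nodup_cons.mpr ⟨hxa1, hnd.1⟩
  have ha1edges : ∀ f ∈ a1.edges, f ∈ c.edges := fun f hf =>
    ((c.rotate_edges x hx).mem_iff).mp (c₁.edges_takeUntil_subset hy1 hf)
  have ha1supp : ∀ w ∈ a1.support, w ∈ c.support := fun w hw =>
    (mem_support_rotate c hx).mp (c₁.support_takeUntil_subset hy1 hw)
  -- first edge of a1 is a shared edge
  obtain ⟨s₁, hadj₁, t₁, ha1eq⟩ := Walk.exists_eq_cons_of_ne hxy a1
  have he₀a1 : s(x, s₁) ∈ a1.edges := by rw [ha1eq, Walk.edges_cons]; simp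
  have he₀c : s(x, s₁) ∈ c.edges := ha1edges _ he₀a1
  -- case on p
  cases p with
  | nil => exact hxy rfl
  | cons h₀ p' =>
    rename_i s
    by_cases hs : s = y
    · subst hs
      have hp' : p' = Walk.nil := path_loop hp.of_cons
      have hexy : e = s(x, s) := by
        subst hp'; simpa using he
      subst hexy
      have hd : (Walk.cons h₀ a1.reverse).IsCycle := by
        rw [Walk.cons_isCycle_iff]
        refine ⟨ha1path.reverse, fun hmem => hec ?_⟩
        rw [Walk.edges_reverse, List.mem_reverse] at hmem
        exact ha1edges _ hmem
      have hshared : s(x, s₁) ∈ (Walk.cons h₀ a1.reverse).edges := by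
        rw [Walk.edges_cons]
        refine List.mem_cons_of_mem _ ?_
        rw [Walk.edges_reverse, List.mem_reverse]
        exact he₀a1
      have hiff := hcac a x c (Walk.cons h₀ a1.reverse) hc hd s(x, s₁) he₀c hshared
      refine hec ((hiff s(x, s)).mpr ?_)
      rw [Walk.edges_cons]
      exact List.mem_cons_self
    · have hsmem : s ∈ (Walk.cons h₀ p').support := by
        rw [Walk.support_cons]
        exact List.mem_cons_of_mem _ p'.start_mem_support
      have hsns : s ∉ c.support := by
        rcases hsupp s hsmem with h | h | h
        · exact h
        · exact absurd h h₀.ne'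
        · exact absurd h hs
      have hxnp' : x ∉ p'.support := by
        have := hp.support_nodup
        rw [Walk.support_cons] at this
        exact (List.nodup_cons.mp this).1
      have hq : (p'.append a1.reverse).IsPath := by
        refine isPath_append hp.of_cons ha1path.reverse ?_
        intro t ht1 ht2
        rw [Walk.support_reverse, List.mem_reverse] at ht2
        have htc := ha1supp t ht2
        have htp : t ∈ (Walk.cons h₀ p').support := by
          rw [Walk.support_cons]; exact List.mem_cons_of_mem _ ht1
        rcases hsupp t htp with h | h | h
        · exact absurd htc h
        · exact absurd (h ▸ ht1) hxnp'
        · exact h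
      have hd : (Walk.cons h₀ (p'.append a1.reverse)).IsCycle := by
        rw [Walk.cons_isCycle_iff]
        refine ⟨hq, fun hmem => ?_⟩
        rw [Walk.edges_append, List.mem_append] at hmem
        rcases hmem with h | h
        · exact hxnp' (p'.fst_mem_support_of_mem_edges h)
        · rw [Walk.edges_reverse, List.mem_reverse] at h
          exact hsns (ha1supp _ (a1.snd_mem_support_of_mem_edges h))
      have hshared : s(x, s₁) ∈ (Walk.cons h₀ (p'.append a1.reverse)).edges := by
        rw [Walk.edges_cons]
        refine List.mem_cons_of_mem _ ?_
        rw [Walk.edges_append, List.mem_append]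
        refine Or.inr ?_
        rw [Walk.edges_reverse, List.mem_reverse]
        exact he₀a1
      have hiff := hcac a x c (Walk.cons h₀ (p'.append a1.reverse)) hc hd s(x, s₁) he₀c hshared
      refine hec ((hiff e).mpr ?_)
      rw [Walk.edges_cons, List.mem_cons] at he
      rw [Walk.edges_cons, List.mem_cons]
      rcases he with h | h
      · exact Or.inl h
      · refine Or.inr ?_
        rw [Walk.edges_append, List.mem_append]
        exact Or.inl h

/-- no chords: an edge between two cycle vertices is a cycle edge -/
lemma no_chord [DecidableEq V] (hcac : EdgesOnAtMostOneCycle G) {a x y : V} {c : G.Walk a a}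
    (hc : c.IsCycle) (hx : x ∈ c.support) (hy : y ∈ c.support) (hadj : G.Adj x y) :
    s(x, y) ∈ c.edges := by
  by_contra hec
  have hp : (Walk.cons hadj Walk.nil).IsPath := by
    simp [Walk.isPath_def, hadj.ne]
  refine crux hcac hc hx hy hadj.ne hp ?_ (e := s(x, y)) (by simp) hec
  intro w hw
  simp only [Walk.support_cons, Walk.support_nil, List.mem_cons] at hw
  rcases hw with rfl | hw
  · exact Or.inr (Or.inl rfl)
  · simp at hw; subst hw; exact Or.inr (Or.inr rfl)

/-- an internal vertex of a path has two distinct neighbours -/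
lemma internal_two_nbrs {a b : V} (p : G.Walk a b) (hp : p.IsPath) :
    ∀ v ∈ p.support, v ≠ a → v ≠ b → ∃ u w, u ≠ w ∧ G.Adj v u ∧ G.Adj v w := by
  induction p with
  | nil =>
    intro v hv hva _
    simp only [Walk.support_nil, List.mem_singleton] at hv
    exact absurd hv hva
  | @cons a s b h q ih =>
    intro v hv hva hvb
    rw [Walk.support_cons, List.mem_cons] at hv
    rcases hv with rfl | hv
    · exact absurd rfl hva
    · by_cases hvs : v = s
      · subst hvs
        obtain ⟨u', h', q', rfl⟩ := Walk.exists_eq_cons_of_ne hvb q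
        have hanq : a ∉ q'.support := by
          have := hp.support_nodup
          rw [Walk.support_cons] at this
          have h1 := (List.nodup_cons.mp this).1
          intro hmem
          exact h1 (by rw [Walk.support_cons]; exact List.mem_cons_of_mem _ hmem)
        refine ⟨a, u', ?_, h.symm, h'⟩
        rintro rfl
        exact hanq q'.start_mem_support
      · exact ih hp.of_cons v hv hvs hvb

/-- leaving a closed-except-z set passes through z -/
lemma exit_through {D : Set V} {z : V}
    (hcl : ∀ w ∈ D, ∀ u, G.Adj w u → u ∈ D ∨ u = z) {t s' : V} (p : G.Walk t s')
    (ht : t ∈ D) (hs : s' ∉ D) : z ∈ p.support := by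
  induction p with
  | nil => exact absurd ht hs
  | @cons t u s' h q ih =>
    rcases hcl _ ht _ h with hu | hu
    · rw [Walk.support_cons]
      exact List.mem_cons_of_mem _ (ih hu hs)
    · rw [Walk.support_cons]
      exact List.mem_cons_of_mem _ (hu ▸ q.start_mem_support)

lemma enter_through {D : Set V} {z : V}
    (hcl : ∀ w ∈ D, ∀ u, G.Adj w u → u ∈ D ∨ u = z) {s' t : V} (p : G.Walk s' t)
    (hs : s' ∉ D) (ht : t ∈ D) : z ∈ p.support := by
  have := exit_through hcl p.reverse ht hs
  rwa [Walk.support_reverse, List.mem_reverse] at this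

/-- first hit of a set along a walk -/
lemma first_hit {T : Set V} : ∀ {v b : V} (_ : G.Walk v b), v ∉ T → b ∈ T →
    ∃ y ∈ T, ∃ q : G.Walk v y, ∀ w ∈ q.support, w ∉ T ∨ w = y := by
  intro v b p
  induction p with
  | nil => intro h1 h2; exact absurd h2 h1
  | @cons v s b h q ih =>
    intro h1 h2
    by_cases hs : s ∈ T
    · refine ⟨s, hs, Walk.cons h Walk.nil, ?_⟩
      intro w hw
      simp only [Walk.support_cons, Walk.support_nil, List.mem_cons, List.mem_singleton] at hw
      rcases hw with rfl | rfl | hw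
      · exact Or.inl h1
      · exact Or.inr rfl
      · simp at hw
    · obtain ⟨y, hy, q', hq'⟩ := ih hs h2
      refine ⟨y, hy, Walk.cons h q', ?_⟩
      intro w hw
      rw [Walk.support_cons, List.mem_cons] at hw
      rcases hw with rfl | hw
      · exact Or.inl h1
      · exact hq' w hw

/-- a nonempty adjacency-closed set in a preconnected graph is everything -/
lemma closed_eq_univ (hpre : G.Preconnected) {T : Set V} {v₀ : V} (h₀ : v₀ ∈ T)
    (hcl : ∀ w ∈ T, ∀ u, G.Adj w u → u ∈ T) : ∀ v, v ∈ T := by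
  have aux : ∀ {s t : V} (_ : G.Walk s t), s ∈ T → t ∈ T := by
    intro s t p
    induction p with
    | nil => exact id
    | cons h q ih => intro ha; exact ih (hcl _ ha _ h)
  intro v
  obtain ⟨p⟩ := hpre v₀ v
  exact aux p h₀

lemma induce_reachable {T : Set V} : ∀ {u v : V} (p : G.Walk u v)
    (_ : ∀ w ∈ p.support, w ∈ T) (hu : u ∈ T) (hv : v ∈ T),
    (G.induce T).Reachable ⟨u, hu⟩ ⟨v, hv⟩ := by
  intro u v p
  induction p with
  | nil => intro _ hu hv; exact Reachable.refl _
  | @cons u s v hadj q ih =>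
    intro h hu hv
    have hs : s ∈ T := h s (by rw [Walk.support_cons]; exact List.mem_cons_of_mem _ q.start_mem_support)
    have hstep : (G.induce T).Adj ⟨u, hu⟩ ⟨s, hs⟩ := by
      simp only [comap_adj, Function.Embedding.coe_subtype]
      exact hadj
    exact (hstep.reachable).trans (ih (fun w hw => h w (by rw [Walk.support_cons]; exact List.mem_cons_of_mem _ hw)) hs hv)

/-- the inclusion homomorphism of an induced subgraph -/
def ival (T : Set V) (G : SimpleGraph V) : G.induce T →g G :=
  ⟨Subtype.val, fun {a b} h => h⟩

lemma ival_inj {T : Set V} : Function.Injective (ival T G) := Subtype.val_injective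

lemma edgesOnAtMostOneCycle_induce {T : Set V} (hcac : EdgesOnAtMostOneCycle G) :
    EdgesOnAtMostOneCycle (G.induce T) := by
  intro a b c d hc hd e he hed f
  have hinj : Function.Injective (ival T G) := Subtype.val_injective
  have hc' : (c.map (ival T G)).IsCycle := (Walk.map_isCycle_iff_of_injective hinj).mpr hc
  have hd' : (d.map (ival T G)).IsCycle := (Walk.map_isCycle_iff_of_injective hinj).mpr hd
  have hmm : ∀ (g : Sym2 ↥T) {x y : ↥T} (p : (G.induce T).Walk x y),
      g ∈ p.edges ↔ Sym2.map (ival T G) g ∈ (p.map (ival T G)).edges := by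
    intro g x y p
    rw [Walk.edges_map]
    exact (List.mem_map_of_injective (Sym2.map.injective hinj)).symm
  have key := hcac _ _ (c.map (ival T G)) (d.map (ival T G)) hc' hd' (Sym2.map (ival T G) e)
    ((hmm e c).mp he) ((hmm e d).mp hed) (Sym2.map (ival T G) f)
  rw [← hmm f c, ← hmm f d] at key
  exact key

lemma deg_induce [Finite V] {T : Set V} {v : V} (hv : v ∈ T)
    (hcl : ∀ u, G.Adj v u → u ∈ T) : deg (G.induce T) ⟨v, hv⟩ = deg G v := by
  have himg : Subtype.val '' ((G.induce T).neighborSet ⟨v, hv⟩) = G.neighborSet v := by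
    ext u
    constructor
    · rintro ⟨⟨u', hu'⟩, hadj, rfl⟩
      exact hadj
    · intro hadj
      exact ⟨⟨u, hcl u hadj⟩, hadj, rfl⟩
  show ((G.induce T).neighborSet ⟨v, hv⟩).ncard = (G.neighborSet v).ncard
  rw [← himg, Set.ncard_image_of_injective _ Subtype.val_injective]

lemma deg_aut [Finite V] (π : G ≃g G) (v : V) : deg G (π v) = deg G v := by
  have himg : G.neighborSet (π v) = (π : V → V) '' G.neighborSet v := by
    ext u
    simp only [mem_neighborSet, Set.mem_image]
    constructor
    · intro h
      refine ⟨π.symm u, ?_, π.apply_symm_apply u⟩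
      have h2 : G.Adj (π.symm (π v)) (π.symm u) := π.symm.map_adj_iff.mpr h
      rwa [π.symm_apply_apply] at h2
    · rintro ⟨w, hw, rfl⟩
      exact π.map_adj_iff.mpr hw
  show (G.neighborSet (π v)).ncard = (G.neighborSet v).ncard
  rw [himg]
  exact Set.ncard_image_of_injective _ π.toEquiv.injective

lemma cycle_exists_other {a : V} {c : G.Walk a a} (hc : c.IsCycle) (z : V) :
    ∃ w ∈ c.support, w ≠ z := by
  have hlen : c.support.tail.length = c.length := by
    have := c.length_support
    have h2 : c.support.tail.length = c.support.length - 1 := by simp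
    omega
  have h3 := hc.three_le_length
  rcases htl : c.support.tail with _ | ⟨w1, _ | ⟨w2, rest2⟩⟩
  · rw [htl] at hlen; simp at hlen; omega
  · rw [htl] at hlen; simp at hlen; omega
  · have hw1 : w1 ∈ c.support := by rw [c.support_eq_cons, htl]; simp
    have hw2 : w2 ∈ c.support := by rw [c.support_eq_cons, htl]; simp
    have hne : w1 ≠ w2 := by
      have hnd := hc.2
      rw [htl, List.nodup_cons] at hnd
      intro heq
      exact hnd.1 (heq ▸ List.mem_cons_self)
    by_cases h : w1 = z
    · refine ⟨w2, hw2, ?_⟩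
      rintro rfl
      exact hne h
    · exact ⟨w1, hw1, h⟩

lemma deg_eq_degree [Fintype V] [DecidableRel G.Adj] (v : V) : deg G v = G.degree v := by
  show (G.neighborSet v).ncard = _
  rw [Set.ncard_eq_toFinset_card']
  rfl

lemma exists_cycle_of_not_acyclic (h : ¬G.IsAcyclic) :
    ∃ (a : V) (c : G.Walk a a), c.IsCycle := by
  simp only [IsAcyclic, not_forall, not_not] at h
  exact h

lemma exists_neighbor [Fintype V] (hconn : G.Connected) (h2 : 2 ≤ Fintype.card V) (v : V) :
    ∃ u, G.Adj v u := by
  obtain ⟨u, hu⟩ := Fintype.exists_ne_of_one_lt_card (by omega) v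
  obtain ⟨p⟩ := hconn.preconnected v u
  cases p with
  | nil => exact absurd rfl hu.symm
  | cons h q => exact ⟨_, h⟩

lemma tree_leaf [Fintype V] (hconn : G.Connected) (hac : G.IsAcyclic)
    (h2 : 2 ≤ Fintype.card V) (ρ : V) : ∃ v, v ≠ ρ ∧ deg G v ≤ 1 := by
  classical
  by_contra hno
  push_neg at hno
  have hdeg : ∀ v, v ≠ ρ → 2 ≤ G.degree v := by
    intro v hv
    have := hno v hv
    rw [deg_eq_degree] at this
    omega
  have hρ : 1 ≤ G.degree ρ := by
    obtain ⟨u, hu⟩ := exists_neighbor hconn h2 ρ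
    have := one_le_deg (G := G) hu
    rwa [deg_eq_degree] at this
  have htree : G.IsTree := ⟨hconn, hac⟩
  have hedges := htree.card_edgeFinset
  have hsum := G.sum_degrees_eq_twice_card_edges
  have hsplit : ∑ x ∈ Finset.univ.erase ρ, G.degree x + G.degree ρ = ∑ v, G.degree v :=
    Finset.sum_erase_add _ _ (Finset.mem_univ ρ)
  have hlow : (Finset.univ.erase ρ).card * 2 ≤ ∑ x ∈ Finset.univ.erase ρ, G.degree x := by
    calc (Finset.univ.erase ρ).card * 2 = ∑ _x ∈ Finset.univ.erase ρ, 2 := by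
          rw [Finset.sum_const, smul_eq_mul]
      _ ≤ _ := Finset.sum_le_sum (fun x hx => hdeg x (Finset.ne_of_mem_erase hx))
  have hcarde : (Finset.univ.erase ρ).card = Fintype.card V - 1 := by
    rw [Finset.card_erase_of_mem (Finset.mem_univ ρ), Finset.card_univ]
  omega

lemma leaf_or_leafcycle : ∀ (n : ℕ) {V : Type u} [Fintype V] (G : SimpleGraph V),
    Fintype.card V ≤ n → IsCactus G → 2 ≤ Fintype.card V → ∀ ρ : V,
    (∃ v, v ≠ ρ ∧ deg G v ≤ 1) ∨
    (∃ (a : V) (c : G.Walk a a), c.IsCycle ∧ ∃ z ∈ c.support,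
       ∀ w ∈ c.support, w ≠ z → deg G w = 2 ∧ w ≠ ρ) := by
  intro n
  induction n with
  | zero => intro V _ G hle _ h2; omega
  | succ n ih =>
    intro V _ G hle hcac h2 ρ
    classical
    by_cases hleaf : ∃ v, v ≠ ρ ∧ deg G v ≤ 1
    · exact Or.inl hleaf
    by_cases hac : G.IsAcyclic
    · exact Or.inl (tree_leaf hcac.1 hac h2 ρ)
    obtain ⟨a, c, hc⟩ := exists_cycle_of_not_acyclic hac
    have hdeg2 : ∀ w ∈ c.support, 2 ≤ deg G w := by
      intro w hw
      obtain ⟨u₁, u₂, h12, he1, he2, _⟩ := cycle_nbrs hc hw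
      exact two_le_deg (c.adj_of_mem_edges he1) (c.adj_of_mem_edges he2) h12
    by_cases h1 : ∃ w₁ w₂, (w₁ ∈ c.support ∧ (3 ≤ deg G w₁ ∨ w₁ = ρ)) ∧
        (w₂ ∈ c.support ∧ (3 ≤ deg G w₂ ∨ w₂ = ρ)) ∧ w₁ ≠ w₂
    · -- hard branch: two special vertices on the cycle; recurse into a side
      obtain ⟨w₁, w₂, hw₁, hw₂, hww⟩ := h1
      -- the side of a cycle vertex
      set A : V → Set V := fun x => {v | v ∉ c.support ∧
        ∃ q : G.Walk v x, ∀ w ∈ q.support, w ∉ c.support ∨ w = x} with hAdef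
      have hdisj : ∀ x y, x ∈ c.support → y ∈ c.support → x ≠ y →
          ∀ v, v ∈ A x → v ∈ A y → False := by
        intro x y hx hy hxy v hvx hvy
        obtain ⟨hvs, q1, hq1⟩ := hvx
        obtain ⟨_, q2, hq2⟩ := hvy
        set r : G.Walk x y := q1.reverse.append q2 with hrdef
        have hrsupp : ∀ w ∈ r.support, w ∉ c.support ∨ w = x ∨ w = y := by
          intro w hw
          rw [hrdef, Walk.mem_support_append_iff] at hw
          rcases hw with hw | hw
          · rw [Walk.support_reverse, List.mem_reverse] at hw
            rcases hq1 w hw with h | h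
            · exact Or.inl h
            · exact Or.inr (Or.inl h)
          · rcases hq2 w hw with h | h
            · exact Or.inl h
            · exact Or.inr (Or.inr h)
        obtain ⟨s, h₀, p', hpeq⟩ := Walk.exists_eq_cons_of_ne hxy r.bypass
        have hxsedge : s(x, s) ∈ r.bypass.edges := by rw [hpeq, Walk.edges_cons]; simp
        by_cases hsy : s = y
        · subst hsy
          have hre : s(x, s) ∈ r.edges := r.edges_bypass_subset hxsedge
          rw [hrdef, Walk.edges_append, List.mem_append] at hre
          rcases hre with h | h
          · rw [Walk.edges_reverse, List.mem_reverse] at h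
            rcases hq1 s (q1.snd_mem_support_of_mem_edges h) with hh | hh
            · exact hh hy
            · exact hxy hh.symm
          · rcases hq2 x (q2.fst_mem_support_of_mem_edges h) with hh | hh
            · exact hh hx
            · exact hxy hh
        · have hss : s ∉ c.support := by
            have hsr : s ∈ r.support := r.support_bypass_subset
              (by rw [hpeq, Walk.support_cons]
                  exact List.mem_cons_of_mem _ p'.start_mem_support)
            rcases hrsupp s hsr with h | h | h
            · exact h
            · exact absurd h h₀.ne'
            · exact absurd h hsy
          refine crux hcac.2 hc hx hy hxy r.bypass_isPath
            (fun w hw => hrsupp w (r.support_bypass_subset hw)) hxsedge ?_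
          intro hmem
          exact hss (c.snd_mem_support_of_mem_edges hmem)
      have hsideA : ∀ x, x ∈ c.support → ∀ v ∈ A x, ∀ u, G.Adj v u → u ∈ A x ∨ u = x := by
        intro x hx v hv u hadj
        by_cases hu : u ∈ c.support
        · by_cases hux : u = x
          · exact Or.inr hux
          · exfalso
            have hvAu : v ∈ A u := by
              refine ⟨hv.1, Walk.cons hadj Walk.nil, ?_⟩
              intro w hw
              simp only [Walk.support_cons, Walk.support_nil, List.mem_cons,
                List.mem_singleton] at hw
              rcases hw with rfl | rfl | hw
              · exact Or.inl hv.1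
              · exact Or.inr rfl
              · simp at hw
            exact hdisj x u hx hu (fun h => hux h.symm) v hv hvAu
        · obtain ⟨hvs, q1, hq1⟩ := hv
          refine Or.inl ⟨hu, Walk.cons hadj.symm q1, ?_⟩
          intro w hw
          rw [Walk.support_cons, List.mem_cons] at hw
          rcases hw with rfl | hw
          · exact Or.inl hu
          · exact hq1 w hw
      -- choose the special vertex x with ρ not on its side
      have hchoice : ∃ x, x ∈ c.support ∧ 3 ≤ deg G x ∧ ρ ∉ A x := by
        by_cases hρc : ρ ∈ c.support
        · have hnotA : ρ ∉ A ρ := fun h => h.1 hρc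
          by_cases hw1ρ : w₁ = ρ
          · subst hw1ρ
            refine ⟨w₂, hw₂.1, ?_, fun h => h.1 hρc⟩
            rcases hw₂.2 with h | h
            · exact h
            · exact absurd h.symm hww
          · refine ⟨w₁, hw₁.1, ?_, fun h => h.1 hρc⟩
            rcases hw₁.2 with h | h
            · exact h
            · exact absurd h hw1ρ
        · obtain ⟨p⟩ := hcac.1.preconnected ρ a
          obtain ⟨y, hy, q, hq⟩ := first_hit (T := {w | w ∈ c.support}) p hρc c.start_mem_support
          have hρAy : ρ ∈ A y := ⟨hρc, q, hq⟩
          have hw1ρ' : w₁ ≠ ρ := fun h => hρc (h ▸ hw₁.1)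
          have hw2ρ' : w₂ ≠ ρ := fun h => hρc (h ▸ hw₂.1)
          have hd1 : 3 ≤ deg G w₁ := by
            rcases hw₁.2 with h | h
            · exact h
            · exact absurd h hw1ρ'
          have hd2 : 3 ≤ deg G w₂ := by
            rcases hw₂.2 with h | h
            · exact h
            · exact absurd h hw2ρ'
          by_cases hw1y : w₁ = y
          · refine ⟨w₂, hw₂.1, hd2, fun h => ?_⟩
            exact hdisj w₂ y hw₂.1 hy (hw1y ▸ hww.symm) ρ h hρAy
          · refine ⟨w₁, hw₁.1, hd1, fun h => ?_⟩
            exact hdisj w₁ y hw₁.1 hy hw1y ρ h hρAy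
      obtain ⟨x, hxsupp, hx3, hρA⟩ := hchoice
      -- a neighbour of x outside the cycle
      obtain ⟨u₁, u₂, h12, he1, he2, huniq⟩ := cycle_nbrs hc hxsupp
      obtain ⟨t, hadjt, ht1, ht2⟩ := exists_third (G := G) (u := u₁) (w := u₂) hx3
      have htedge : s(x, t) ∉ c.edges := by
        intro hmem
        rcases huniq t hmem with h | h
        · exact ht1 h
        · exact ht2 h
      have htsupp : t ∉ c.support := by
        intro hmem
        exact htedge (no_chord hcac.2 hc hxsupp hmem hadjt)
      have htA : t ∈ A x := by
        refine ⟨htsupp, Walk.cons hadjt.symm Walk.nil, ?_⟩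
        intro w hw
        simp only [Walk.support_cons, Walk.support_nil, List.mem_cons, List.mem_singleton] at hw
        rcases hw with rfl | rfl | hw
        · exact Or.inl htsupp
        · exact Or.inr rfl
        · simp at hw
      set T : Set V := {v | v ∈ A x ∨ v = x} with hTdef
      have hxT : x ∈ T := Or.inr rfl
      have htT : t ∈ T := Or.inl htA
      have hclT : ∀ v ∈ A x, ∀ u, G.Adj v u → u ∈ T := fun v hv u hu =>
        hsideA x hxsupp v hv u hu
      have hAnotsupp : ∀ v ∈ A x, v ∉ c.support := fun v hv => hv.1
      -- reach x inside T
      have hreach : ∀ v (hv : v ∈ T), (G.induce T).Reachable ⟨v, hv⟩ ⟨x, hxT⟩ := by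
        intro v hv
        rcases hv with hvA | rfl
        · obtain ⟨hvs, q, hq⟩ := hvA
          refine induce_reachable q ?_ (Or.inl ⟨hvs, q, hq⟩) hxT
          intro w hw
          rcases hq w hw with h | h
          · refine Or.inl ⟨h, q.dropUntil w hw, ?_⟩
            intro w' hw'
            exact hq w' (q.support_dropUntil_subset hw hw')
          · exact Or.inr h
        · exact Reachable.refl _
      have hHconn : (G.induce T).Connected := by
        rw [connected_iff]
        refine ⟨fun p q => ?_, ⟨⟨x, hxT⟩⟩⟩
        exact (hreach p.1 p.2).trans (hreach q.1 q.2).symm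
      have hHcac : IsCactus (G.induce T) := ⟨hHconn, edgesOnAtMostOneCycle_induce hcac.2⟩
      have hxt : x ≠ t := fun h => htsupp (h ▸ hxsupp)
      have hcard2 : 2 ≤ Fintype.card ↥T :=
        Fintype.one_lt_card_iff_nontrivial.mpr
          ⟨⟨x, hxT⟩, ⟨t, htT⟩, by simp [Subtype.ext_iff]; exact hxt⟩
      have hcardle : Fintype.card ↥T ≤ n := by
        obtain ⟨w, hwsupp, hwx⟩ := cycle_exists_other hc x
        have hwT : w ∉ T := by
          intro hw
          rcases hw with hw | hw
          · exact hAnotsupp w hw hwsupp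
          · exact hwx hw
        have hlt := Fintype.card_subtype_lt (p := fun v => v ∈ T) hwT
        rw [show Fintype.card {v // (fun v => v ∈ T) v} = Fintype.card ↥T from
          Fintype.card_congr (Equiv.refl _)] at hlt
        omega
      have hdegT : ∀ (v' : ↥T) (hvA : v'.1 ∈ A x),
          deg (G.induce T) v' = deg G v'.1 := by
        intro v' hvA
        exact deg_induce v'.2 (fun u hu => hclT v'.1 hvA u hu)
      rcases ih (G.induce T) hcardle hHcac hcard2 ⟨x, hxT⟩ with
        ⟨v', hne, hdegv'⟩ | ⟨a', c', hc', z', hz'supp, hz'prop⟩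
      · exfalso
        have hvA : v'.1 ∈ A x := by
          rcases v'.2 with h | h
          · exact h
          · exact absurd (Subtype.ext h) hne
        have hdval : deg G v'.1 ≤ 1 := by
          have heq := hdegT v' hvA
          omega
        exact hleaf ⟨v'.1, fun h => hρA (h ▸ hvA), hdval⟩
      · right
        refine ⟨(ival T G) a', c'.map (ival T G), (Walk.map_isCycle_iff_of_injective ival_inj).mpr hc',
          z'.1, ?_, ?_⟩
        · rw [Walk.support_map]
          exact List.mem_map_of_mem hz'supp
        · intro w hwsupp hwz
          rw [Walk.support_map, List.mem_map] at hwsupp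
          obtain ⟨w', hw', rfl⟩ := hwsupp
          have hwz' : w' ≠ z' := fun h => hwz (congrArg Subtype.val h)
          obtain ⟨hdH, hwρH⟩ := hz'prop w' hw' hwz'
          have hvA : w'.1 ∈ A x := by
            rcases w'.2 with h | h
            · exact h
            · exact absurd (Subtype.ext h) hwρH
          show deg G w'.1 = 2 ∧ w'.1 ≠ ρ
          constructor
          · have heq := hdegT w' hvA
            rw [← heq]
            exact hdH
          · exact fun h => hρA (h ▸ hvA)
    · -- easy branch: at most one special vertex
      push_neg at h1
      right
      by_cases hsp : ∃ w, w ∈ c.support ∧ (3 ≤ deg G w ∨ w = ρ)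
      · obtain ⟨z, hz⟩ := hsp
        refine ⟨a, c, hc, z, hz.1, ?_⟩
        intro w hw hwz
        have hnotsp : ¬(3 ≤ deg G w ∨ w = ρ) := by
          intro hcontra
          exact hwz (h1 w z ⟨hw, hcontra⟩ hz)
        push_neg at hnotsp
        exact ⟨le_antisymm (by omega) (hdeg2 w hw), hnotsp.2⟩
      · push_neg at hsp
        refine ⟨a, c, hc, a, c.start_mem_support, ?_⟩
        intro w hw _
        have := hsp w hw
        exact ⟨le_antisymm (by omega) (hdeg2 w hw), this.2⟩

lemma main_rec : ∀ (n : ℕ) {V : Type u} [Fintype V] (G : SimpleGraph V),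
    Fintype.card V ≤ n → IsCactus G →
    ∃ S : Set V,
      ((∃ v : V, S = {v}) ∨
        (∃ u v : V, G.Adj u v ∧ S = {u, v}) ∨
        (∃ (a : V) (c : G.Walk a a), c.IsCycle ∧ S = {v | v ∈ c.support} ∧
          ∀ u ∈ S, ∀ v ∈ S, (G.Adj u v ↔ s(u, v) ∈ c.edges))) ∧
      ∀ π : G ≃g G, ∀ v : V, v ∈ S ↔ π v ∈ S := by
  intro n
  induction n with
  | zero =>
    intro V _ G hle hcac
    have := Fintype.card_pos_iff.mpr hcac.1.nonempty
    omega
  | succ n ih =>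
    intro V _ G hle hcac
    classical
    have hpos : 1 ≤ Fintype.card V := Fintype.card_pos_iff.mpr hcac.1.nonempty
    by_cases hcard1 : Fintype.card V = 1
    · obtain ⟨v, hv⟩ := Fintype.card_eq_one_iff.mp hcard1
      refine ⟨{v}, Or.inl ⟨v, rfl⟩, ?_⟩
      intro π u
      simp only [Set.mem_singleton_iff]
      constructor
      · intro _; exact hv _
      · intro _; exact hv _
    by_cases hcard2 : Fintype.card V = 2
    · obtain ⟨u, v, huv, huniv⟩ := Nat.card_eq_two_iff.mp
        (by rw [Nat.card_eq_fintype_card (α := V)]; exact hcard2)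
      have hall : ∀ w : V, w = u ∨ w = v := by
        intro w
        have : w ∈ ({u, v} : Set V) := huniv ▸ Set.mem_univ w
        simpa using this
      have hadj : G.Adj u v := by
        obtain ⟨p⟩ := hcac.1.preconnected u v
        cases p with
        | nil => exact absurd rfl huv
        | cons h q =>
          rename_i s
          rcases hall s with rfl | rfl
          · exact absurd rfl h.ne
          · exact h
      refine ⟨{u, v}, Or.inr (Or.inl ⟨u, v, hadj, rfl⟩), ?_⟩
      have hmem : ∀ w : V, w ∈ ({u, v} : Set V) := by
        intro w
        rcases hall w with rfl | rfl
        · exact Set.mem_insert _ _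
        · exact Set.mem_insert_of_mem _ rfl
      intro π w
      exact ⟨fun _ => hmem _, fun _ => hmem _⟩
    by_cases hham : ∃ (a : V) (c : G.Walk a a), c.IsCycle ∧ ∀ v, v ∈ c.support
    · obtain ⟨a, c, hc, hall⟩ := hham
      refine ⟨{v | v ∈ c.support}, Or.inr (Or.inr ⟨a, c, hc, rfl, ?_⟩), ?_⟩
      · intro x hx y hy
        exact ⟨fun hadj => no_chord hcac.2 hc hx hy hadj, fun he => c.adj_of_mem_edges he⟩
      · intro π w
        exact ⟨fun _ => hall _, fun _ => hall _⟩
    -- main case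
    have h3 : 3 ≤ Fintype.card V := by omega
    have hne : Nonempty V := hcac.1.nonempty
    obtain ⟨ρ⟩ := hne
    -- the removable set
    set R : Set V := {v | deg G v ≤ 1 ∨ (deg G v = 2 ∧
      ∃ (a : V) (c : G.Walk a a), c.IsCycle ∧ v ∈ c.support ∧ ∃ z ∈ c.support,
        ∀ w ∈ c.support, w ≠ z → deg G w = 2)} with hRdef
    have hdeg2supp : ∀ {a : V} {c : G.Walk a a}, c.IsCycle → ∀ w ∈ c.support, 2 ≤ deg G w := by
      intro a c hc w hw
      obtain ⟨u₁, u₂, h12, he1, he2, _⟩ := cycle_nbrs hc hw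
      exact two_le_deg (c.adj_of_mem_edges he1) (c.adj_of_mem_edges he2) h12
    -- interior of a leaf cycle is closed except at z
    have hclosure : ∀ {a : V} {c : G.Walk a a} (_ : c.IsCycle) (z : V),
        (∀ w ∈ c.support, w ≠ z → deg G w = 2) →
        ∀ w ∈ {w | w ∈ c.support ∧ w ≠ z}, ∀ u, G.Adj w u →
          u ∈ {w | w ∈ c.support ∧ w ≠ z} ∨ u = z := by
      intro a c hc z hall2 w hw u hadj
      obtain ⟨u₁, u₂, h12, he1, he2, _⟩ := cycle_nbrs hc hw.1
      have hd2 : deg G w = 2 := hall2 w hw.1 hw.2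
      have hnb := nbhd_eq_pair hd2 (c.adj_of_mem_edges he1) (c.adj_of_mem_edges he2) h12
      have husupp : u ∈ c.support := by
        have : u ∈ G.neighborSet w := hadj
        rw [hnb] at this
        rcases this with rfl | h
        · exact c.snd_mem_support_of_mem_edges he1
        · rcases h with rfl
          exact c.snd_mem_support_of_mem_edges he2
      by_cases huz : u = z
      · exact Or.inr huz
      · exact Or.inl ⟨husupp, huz⟩
    -- R is nonempty
    have hRne : ∃ v, v ∈ R := by
      rcases leaf_or_leafcycle (Fintype.card V) G le_rfl hcac (by omega) ρ with
        ⟨v, _, hdeg⟩ | ⟨a, c, hc, z, hzsupp, hzprop⟩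
      · exact ⟨v, Or.inl hdeg⟩
      · obtain ⟨w, hwsupp, hwz⟩ := cycle_exists_other hc z
        exact ⟨w, Or.inr ⟨(hzprop w hwsupp hwz).1, a, c, hc, hwsupp, z, hzsupp,
          fun w' hw' hwz' => (hzprop w' hw' hwz').1⟩⟩
    -- complement of R is nonempty
    have hWne : ∃ v, v ∉ R := by
      by_contra hallR
      push_neg at hallR
      by_cases hlf : ∃ v, deg G v ≤ 1
      · obtain ⟨v, hv⟩ := hlf
        by_cases hv0 : deg G v = 0
        · have hempty : G.neighborSet v = ∅ :=
            (Set.ncard_eq_zero (Set.toFinite _)).mp hv0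
          have : ∀ u, u ∈ ({v} : Set V) :=
            closed_eq_univ hcac.1.preconnected (Set.mem_singleton v)
              (by
                rintro w rfl u hadj
                exact absurd (hempty ▸ hadj : u ∈ (∅ : Set V)) (Set.notMem_empty u))
          have hle1 : Fintype.card V ≤ 1 := Fintype.card_le_one_iff.mpr
            (fun a b => (this a).trans (this b).symm)
          omega
        · have hv1 : deg G v = 1 := by omega
          obtain ⟨s, hs⟩ := (Set.ncard_eq_one).mp hv1
          have hadj : G.Adj v s := by
            have : s ∈ G.neighborSet v := hs ▸ Set.mem_singleton s
            exact this
          have hnbv : G.neighborSet v = {s} := hs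
          have hdegs : 2 ≤ deg G s := by
            by_contra hds
            push_neg at hds
            have hds1 : deg G s = 1 := by
              have := one_le_deg hadj.symm
              omega
            obtain ⟨t, ht⟩ := (Set.ncard_eq_one).mp hds1
            have hvt : v ∈ G.neighborSet s := hadj.symm
            rw [ht] at hvt
            have hnbs : G.neighborSet s = {v} := by rw [ht, hvt]
            have hclosed : ∀ w ∈ ({v, s} : Set V), ∀ u, G.Adj w u → u ∈ ({v, s} : Set V) := by
              rintro w hw u hadju
              rcases hw with rfl | hw
              · have : u ∈ G.neighborSet w := hadju
                rw [hnbv] at this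
                exact Or.inr this
              · rcases hw with rfl
                have : u ∈ G.neighborSet w := hadju
                rw [hnbs] at this
                exact Or.inl this
            have huniv := closed_eq_univ hcac.1.preconnected (Set.mem_insert v {s}) hclosed
            have hle2 : Fintype.card V ≤ 2 := by
              have hsub : (Finset.univ : Finset V) ⊆ {v, s} := by
                intro w _
                have := huniv w
                rcases this with rfl | h
                · simp
                · simp at h; simp [h]
              calc Fintype.card V = Finset.univ.card := rfl
                _ ≤ ({v, s} : Finset V).card := Finset.card_le_card hsub
                _ ≤ 2 := Finset.card_insert_le _ _ |>.trans (by simp)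
            omega
          rcases hallR s with hcase | ⟨hds2, a, c, hc, hssupp, z, hzsupp, hall2⟩
          · omega
          · obtain ⟨u₁, u₂, h12, he1, he2, _⟩ := cycle_nbrs hc hssupp
            have hnb := nbhd_eq_pair hds2 (c.adj_of_mem_edges he1) (c.adj_of_mem_edges he2) h12
            have hvmem : v ∈ G.neighborSet s := hadj.symm
            rw [hnb] at hvmem
            have hvsupp : v ∈ c.support := by
              rcases hvmem with rfl | h
              · exact c.snd_mem_support_of_mem_edges he1
              · rcases h with rfl
                exact c.snd_mem_support_of_mem_edges he2
            have := hdeg2supp hc v hvsupp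
            omega
      · push_neg at hlf
        rcases hallR ρ with hcase | ⟨_, a, c, hc, _, z, hzsupp, hall2⟩
        · have := hlf ρ; omega
        · have hzdeg : deg G z = 2 := by
            rcases hallR z with hcase | ⟨hdz, _⟩
            · have := hlf z; omega
            · exact hdz
          have hallsupp : ∀ w ∈ c.support, deg G w = 2 := by
            intro w hw
            by_cases hwz : w = z
            · exact hwz ▸ hzdeg
            · exact hall2 w hw hwz
          have hclosed : ∀ w ∈ {w | w ∈ c.support}, ∀ u, G.Adj w u →
              u ∈ {w | w ∈ c.support} := by
            intro w hw u hadj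
            obtain ⟨u₁, u₂, h12, he1, he2, _⟩ := cycle_nbrs hc hw
            have hnb := nbhd_eq_pair (hallsupp w hw) (c.adj_of_mem_edges he1)
              (c.adj_of_mem_edges he2) h12
            have : u ∈ G.neighborSet w := hadj
            rw [hnb] at this
            rcases this with rfl | h
            · exact c.snd_mem_support_of_mem_edges he1
            · rcases h with rfl
              exact c.snd_mem_support_of_mem_edges he2
          have huniv := closed_eq_univ hcac.1.preconnected
            (show a ∈ {w | w ∈ c.support} from c.start_mem_support) hclosed
          exact hham ⟨a, c, hc, huniv⟩
    -- paths between vertices outside R avoid R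
    have havoid : ∀ (s t : V), s ∉ R → t ∉ R → ∀ (p : G.Walk s t), p.IsPath →
        ∀ v ∈ p.support, v ∉ R := by
      intro s t hsR htR p hp v hv hvR
      have hvs : v ≠ s := fun h => hsR (h ▸ hvR)
      have hvt : v ≠ t := fun h => htR (h ▸ hvR)
      rcases hvR with hdeg | ⟨hdv, a, c, hc, hvsupp, z, hzsupp, hall2⟩
      · obtain ⟨u₁, u₂, h12, ha1, ha2⟩ := internal_two_nbrs p hp v hv hvs hvt
        have := two_le_deg ha1 ha2 h12
        omega
      · have hvz : v ≠ z := by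
          rintro rfl
          have hallsupp : ∀ w ∈ c.support, deg G w = 2 := by
            intro w hw
            by_cases hwz : w = v
            · exact hwz ▸ hdv
            · exact hall2 w hw hwz
          have hclosed : ∀ w ∈ {w | w ∈ c.support}, ∀ u, G.Adj w u →
              u ∈ {w | w ∈ c.support} := by
            intro w hw u hadj
            obtain ⟨u₁, u₂, h12, he1, he2, _⟩ := cycle_nbrs hc hw
            have hnb := nbhd_eq_pair (hallsupp w hw) (c.adj_of_mem_edges he1)
              (c.adj_of_mem_edges he2) h12
            have : u ∈ G.neighborSet w := hadj
            rw [hnb] at this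
            rcases this with rfl | h
            · exact c.snd_mem_support_of_mem_edges he1
            · rcases h with rfl
              exact c.snd_mem_support_of_mem_edges he2
          exact hham ⟨a, c, hc, closed_eq_univ hcac.1.preconnected
            (show a ∈ {w | w ∈ c.support} from c.start_mem_support) hclosed⟩
        have hDR : ∀ w ∈ {w | w ∈ c.support ∧ w ≠ z}, w ∈ R := by
          intro w hw
          exact Or.inr ⟨hall2 w hw.1 hw.2, a, c, hc, hw.1, z, hzsupp, hall2⟩
        have hsD : s ∉ {w | w ∈ c.support ∧ w ≠ z} := fun h => hsR (hDR s h)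
        have htD : t ∉ {w | w ∈ c.support ∧ w ≠ z} := fun h => htR (hDR t h)
        have hvD : v ∈ {w | w ∈ c.support ∧ w ≠ z} := ⟨hvsupp, hvz⟩
        have hclD := hclosure hc z hall2
        have hz1 : z ∈ (p.takeUntil v hv).support :=
          enter_through hclD (p.takeUntil v hv) hsD hvD
        have hz2 : z ∈ (p.dropUntil v hv).support :=
          exit_through hclD (p.dropUntil v hv) hvD htD
        have hnd := hp.support_nodup
        rw [← p.take_spec hv, Walk.support_append, List.nodup_append] at hnd
        have hz2' : z ∈ (p.dropUntil v hv).support.tail := by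
          have := (p.dropUntil v hv).support_eq_cons
          rw [this, List.mem_cons] at hz2
          rcases hz2 with h | h
          · exact absurd h.symm hvz
          · exact h
        exact hnd.2.2 z hz1 z hz2' rfl
    -- set up the induced graph on the complement of R
    set W : Set V := {v | v ∉ R} with hWdef
    obtain ⟨w₀, hw₀⟩ := hWne
    have hWconn : (G.induce W).Connected := by
      rw [connected_iff]
      refine ⟨fun x y => ?_, ⟨⟨w₀, hw₀⟩⟩⟩
      obtain ⟨p⟩ := hcac.1.preconnected x.1 y.1
      have havoid' := havoid x.1 y.1 x.2 y.2 p.bypass p.bypass_isPath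
      exact induce_reachable p.bypass (fun w hw => havoid' w hw) x.2 y.2
    have hWcac : IsCactus (G.induce W) := ⟨hWconn, edgesOnAtMostOneCycle_induce hcac.2⟩
    have hcardle : Fintype.card ↥W ≤ n := by
      obtain ⟨r₀, hr₀⟩ := hRne
      have hr₀W : r₀ ∉ W := fun h => h hr₀
      have hlt := Fintype.card_subtype_lt (p := fun v => v ∈ W) hr₀W
      rw [show Fintype.card {v // (fun v => v ∈ W) v} = Fintype.card ↥W from
        Fintype.card_congr (Equiv.refl _)] at hlt
      omega
    obtain ⟨S', hS'cases, hS'inv⟩ := ih (G.induce W) hcardle hWcac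
    refine ⟨Subtype.val '' S', ?_, ?_⟩
    · rcases hS'cases with ⟨v', rfl⟩ | ⟨u', v', hadj', rfl⟩ | ⟨a', c', hc', hSeq, hedges⟩
      · exact Or.inl ⟨v'.1, by rw [Set.image_singleton]⟩
      · exact Or.inr (Or.inl ⟨u'.1, v'.1, hadj',
          by rw [Set.image_insert_eq, Set.image_singleton]⟩)
      · refine Or.inr (Or.inr ⟨(ival W G) a', c'.map (ival W G),
          (Walk.map_isCycle_iff_of_injective ival_inj).mpr hc', ?_, ?_⟩)
        · rw [hSeq]
          ext v
          simp only [Set.mem_image, Set.mem_setOf_eq, Walk.support_map, List.mem_map]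
          constructor
          · rintro ⟨w', hw', rfl⟩; exact ⟨w', hw', rfl⟩
          · rintro ⟨w', hw', rfl⟩; exact ⟨w', hw', rfl⟩
        · rintro u ⟨u', hu', rfl⟩ v ⟨v', hv', rfl⟩
          rw [hSeq] at hu' hv'
          have hmain := hedges u' (hSeq ▸ hu') v' (hSeq ▸ hv')
          have hGadj : G.Adj u'.1 v'.1 ↔ (G.induce W).Adj u' v' := Iff.rfl
          rw [hGadj, hmain]
          rw [Walk.edges_map]
          rw [show s(u'.1, v'.1) = Sym2.map (ival W G) s(u', v') from rfl]
          exact (List.mem_map_of_injective (Sym2.map.injective ival_inj)).symm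
    · -- invariance
      have hRinv : ∀ (π : G ≃g G) (v : V), v ∈ R → π v ∈ R := by
        intro π v hv
        rcases hv with hdeg | ⟨hdv, a, c, hc, hvsupp, z, hzsupp, hall2⟩
        · exact Or.inl (by rw [deg_aut]; exact hdeg)
        · have hπinj : Function.Injective (π.toHom : V → V) := π.toEquiv.injective
          refine Or.inr ⟨by rw [deg_aut]; exact hdv, π a, c.map π.toHom,
            (Walk.map_isCycle_iff_of_injective hπinj).mpr hc, ?_, π z, ?_, ?_⟩
          · rw [Walk.support_map]
            exact List.mem_map_of_mem hvsupp
          · rw [Walk.support_map]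
            exact List.mem_map_of_mem hzsupp
          · intro w hw hwz
            rw [Walk.support_map, List.mem_map] at hw
            obtain ⟨w', hw', rfl⟩ := hw
            have hwz' : w' ≠ z := fun h => hwz (congrArg _ h)
            have := hall2 w' hw' hwz'
            rw [show (π.toHom : V → V) w' = π w' from rfl, deg_aut]
            exact this
      have hWinv : ∀ (π : G ≃g G) (v : V), v ∈ W ↔ π v ∈ W := by
        intro π v
        constructor
        · intro hv hmem
          exact hv (by
            have := hRinv π.symm (π v) hmem
            rwa [show π.symm (π v) = v from π.toEquiv.symm_apply_apply v] at this)
        · intro hv hmem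
          exact hv (hRinv π v hmem)
      intro π v
      -- restricted automorphism
      let π' : (G.induce W) ≃g (G.induce W) :=
        { toEquiv := Equiv.subtypeEquiv π.toEquiv (fun a => hWinv π a)
          map_rel_iff' := by
            intro a b
            simp only [Equiv.subtypeEquiv_apply, comap_adj, Function.Embedding.coe_subtype]
            exact π.map_adj_iff }
      by_cases hvW : v ∈ W
      · have hπW : π v ∈ W := (hWinv π v).mp hvW
        have h1 : v ∈ Subtype.val '' S' ↔ (⟨v, hvW⟩ : ↥W) ∈ S' := by
          constructor
          · rintro ⟨w', hw', heq⟩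
            rwa [show w' = ⟨v, hvW⟩ from Subtype.ext heq] at hw'
          · intro h
            exact ⟨⟨v, hvW⟩, h, rfl⟩
        have h2 : π v ∈ Subtype.val '' S' ↔ (⟨π v, hπW⟩ : ↥W) ∈ S' := by
          constructor
          · rintro ⟨w', hw', heq⟩
            rwa [show w' = ⟨π v, hπW⟩ from Subtype.ext heq] at hw'
          · intro h
            exact ⟨⟨π v, hπW⟩, h, rfl⟩
        rw [h1, h2]
        have := hS'inv π' ⟨v, hvW⟩
        rwa [show π' ⟨v, hvW⟩ = ⟨π v, hπW⟩ from rfl] at this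
      · constructor
        · rintro ⟨w', _, heq⟩
          exact absurd (heq ▸ w'.2) hvW
        · rintro ⟨w', hw', heq⟩
          have : π v ∈ W := heq ▸ w'.2
          exact absurd ((hWinv π v).mpr this) hvW
end CactusAux
/-- Every cactus graph has a set `S` of vertices such that the induced
subgraph `H[S]` is a single vertex, a single edge, or a cycle, and `S` is fixed
setwise by every automorphism. -/
theorem cactus_fixed_centre {V : Type*} [Fintype V]
    (G : SimpleGraph V) (hcactus : IsCactus G) :
    ∃ S : Set V,
      ((∃ v : V, S = {v}) ∨
        (∃ u v : V, G.Adj u v ∧ S = {u, v}) ∨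
        (∃ (a : V) (c : G.Walk a a), c.IsCycle ∧ S = {v | v ∈ c.support} ∧
          ∀ u ∈ S, ∀ v ∈ S, (G.Adj u v ↔ s(u, v) ∈ c.edges))) ∧
      ∀ π : G ≃g G, ∀ v : V, v ∈ S ↔ π v ∈ S := by
  exact CactusAux.main_rec (Fintype.card V) G le_rfl hcactus
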